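/- If M is a balanced representation of the generalized subspace quiver Γ and N is a quotient representation of M with θ(dim N) = 0 (θ_{v₀} = -m, θ_{v_{ij}} = w_{ij}), then N is balanced. -/
import Mathlib


open Finset Module

/-- A representation of the generalized subspace quiver is balanced if for every cluster `i`
the combined map `Ψ(X,i)` is bijective. -/
def IsBalancedRep (K : Type*) [Field K] {m : ℕ} {r : Fin m → ℕ} (w : ∀ i, Fin (r i) → ℕ)
    {X0 : Type*} [AddCommGroup X0] [Module K X0]
    {X : ∀ i, Fin (r i) → Type*} [∀ i j, AddCommGroup (X i j)] [∀ i j, Module K (X i j)]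
    (f : ∀ i j, Fin (w i j) → (X i j →ₗ[K] X0)) : Prop :=
  ∀ i, Function.Bijective
    (fun g : (j : Fin (r i)) → Fin (w i j) → X i j => ∑ j, ∑ k, f i j k (g j k))

/-- If `M` is a balanced representation of the generalized subspace quiver and `N` is a
quotient representation of `M` with `θ(dim N) = 0` (where `θ_{v₀} = -m`,
`θ_{v_{ij}} = w i j`), then `N` is balanced. -/
theorem quotient_theta_zero_balanced (K : Type*) [Field K]
    (m : ℕ) (r : Fin m → ℕ) (w : ∀ i, Fin (r i) → ℕ)
    (M0 N0 : Type*) [AddCommGroup M0] [Module K M0] [FiniteDimensional K M0]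
    [AddCommGroup N0] [Module K N0] [FiniteDimensional K N0]
    (M N : ∀ i, Fin (r i) → Type*)
    [∀ i j, AddCommGroup (M i j)] [∀ i j, Module K (M i j)]
    [∀ i j, FiniteDimensional K (M i j)]
    [∀ i j, AddCommGroup (N i j)] [∀ i j, Module K (N i j)]
    [∀ i j, FiniteDimensional K (N i j)]
    (fM : ∀ i j, Fin (w i j) → (M i j →ₗ[K] M0))
    (fN : ∀ i j, Fin (w i j) → (N i j →ₗ[K] N0))
    -- the quotient morphism `π : M → N`, surjective at every vertex
    (π0 : M0 →ₗ[K] N0) (π : ∀ i j, M i j →ₗ[K] N i j)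
    (hπ : ∀ i j k x, fN i j k (π i j x) = π0 (fM i j k x))
    (hsurj0 : Function.Surjective π0) (hsurj : ∀ i j, Function.Surjective (π i j))
    (hM : IsBalancedRep K w fM)
    (hθ : -(m : ℤ) * (finrank K N0 : ℤ) +
      ∑ i, ∑ j, (w i j : ℤ) * (finrank K (N i j) : ℤ) = 0) :
    IsBalancedRep K w fN := by
  intro i
  -- the linear map version of Ψ(N,i)
  let Ψ : ((j : Fin (r i)) → Fin (w i j) → N i j) →ₗ[K] N0 :=
    { toFun := fun g => ∑ j, ∑ k, fN i j k (g j k)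
      map_add' := by intros; simp [Finset.sum_add_distrib]
      map_smul' := by intros; simp [Finset.smul_sum] }
  have hΨsurj : ∀ i, Function.Surjective
      (fun g : (j : Fin (r i)) → Fin (w i j) → N i j => ∑ j, ∑ k, fN i j k (g j k)) := by
    clear hθ Ψ
    intro i y
    obtain ⟨x, hx⟩ := hsurj0 y
    obtain ⟨g, hg⟩ := (hM i).2 x
    refine ⟨fun j k => π i j (g j k), ?_⟩
    simp only [hπ, ← map_sum]
    simp only at hg
    rw [hg, hx]
  have hdom : ∀ i, (finrank K ((j : Fin (r i)) → Fin (w i j) → N i j) : ℤ)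
      = ∑ j, (w i j : ℤ) * (finrank K (N i j) : ℤ) := by
    intro i
    rw [Module.finrank_pi_fintype]
    push_cast
    refine Finset.sum_congr rfl fun j _ => ?_
    rw [Module.finrank_pi_fintype]
    simp [mul_comm]
  have hle : ∀ i, (finrank K N0 : ℤ) ≤ ∑ j, (w i j : ℤ) * (finrank K (N i j) : ℤ) := by
    intro i
    rw [← hdom i]
    have : Function.Surjective (fun g : (j : Fin (r i)) → Fin (w i j) → N i j =>
        ∑ j, ∑ k, fN i j k (g j k)) := hΨsurj i
    -- use linear map
    let Ψ' : ((j : Fin (r i)) → Fin (w i j) → N i j) →ₗ[K] N0 :=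
      { toFun := fun g => ∑ j, ∑ k, fN i j k (g j k)
        map_add' := by intros; simp [Finset.sum_add_distrib]
        map_smul' := by intros; simp [Finset.smul_sum] }
    have hr : LinearMap.range Ψ' = ⊤ := LinearMap.range_eq_top.2 this
    have := LinearMap.finrank_range_le Ψ'
    rw [hr, finrank_top] at this
    exact_mod_cast this
  -- equality from hθ
  have heq : (finrank K ((j : Fin (r i)) → Fin (w i j) → N i j))
      = finrank K N0 := by
    have hsum : ∑ i' : Fin m, ((∑ j, (w i' j : ℤ) * (finrank K (N i' j) : ℤ))
        - (finrank K N0 : ℤ)) = 0 := by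
      rw [Finset.sum_sub_distrib, Finset.sum_const, Finset.card_univ, Fintype.card_fin]
      rw [nsmul_eq_mul]
      linarith [hθ]
    have hall := (Finset.sum_eq_zero_iff_of_nonneg (fun i' _ => by
      have := hle i'; omega)).1 hsum i (Finset.mem_univ i)
    have := hdom i
    omega
  exact ⟨((LinearMap.injective_iff_surjective_of_finrank_eq_finrank (f := Ψ) heq).2 (hΨsurj i) : _),
    hΨsurj i⟩
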